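/- Let $Z$ be a Banach space equal to an $\ell^\infty$-sum $\ell^\infty(X_k)$, $S: Z \to Z$ a bounded operator, $l \in \mathbb{N}$, $x^* \in X_l^*$, $\rho > 0$, and $\Lambda \subset \mathbb{N}$ infinite. Then there is an infinite subset $\Lambda' \subset \Lambda$ such that $\|x^* \circ P_l \circ S \circ P_{\Lambda'}\| \le \rho/2$, where $P_l$ is the coordinate projection onto $X_l$ and $P_{\Lambda'}$ is the projection onto coordinates in $\Lambda'$. -/
import Mathlib


open scoped ENNReal

/-- For a bounded operator `S` on `Z = ℓ^∞(X_k)`, a coordinate `l`, a functional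
`x* ∈ X_l*`, `ρ > 0` and an infinite `Λ ⊂ ℕ`, there is an infinite `Λ' ⊂ Λ` such that
`‖x* ∘ P_l ∘ S ∘ P_{Λ'}‖ ≤ ρ/2`, i.e. `|x*((S z)_l)| ≤ ρ/2` for every `z` in the unit ball
of `Z` supported in `Λ'`. -/
theorem exists_infinite_subset_small_coordinate_functional
    (X : ℕ → Type*) [∀ k, NormedAddCommGroup (X k)] [∀ k, NormedSpace ℝ (X k)]
    [∀ k, CompleteSpace (X k)]
    (S : lp X ∞ →L[ℝ] lp X ∞) (l : ℕ) (xstar : X l →L[ℝ] ℝ)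
    (ρ : ℝ) (hρ : 0 < ρ) (Λ : Set ℕ) (hΛ : Λ.Infinite) :
    ∃ Λ' : Set ℕ, Λ' ⊆ Λ ∧ Λ'.Infinite ∧
      ∀ z : lp X ∞, ‖z‖ ≤ 1 → (∀ k ∉ Λ', (z : ∀ k, X k) k = 0) →
        |xstar ((S z : ∀ k, X k) l)| ≤ ρ / 2 := by
  by_contra hcon
  push_neg at hcon
  have := hΛ.to_subtype
  obtain ⟨e⟩ : Nonempty (ℕ ≃ Λ) := nonempty_equiv_of_countable
  set g : ℕ → ℕ → ℕ := fun j m => (e (Nat.pair j m) : ℕ) with hg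
  have hginj : ∀ j m j' m', g j m = g j' m' → j = j' ∧ m = m' := by
    intro j m j' m' h
    have h2 := e.injective (Subtype.coe_injective h)
    exact Nat.pair_eq_pair.mp h2
  set L : ℕ → Set ℕ := fun j => Set.range (g j) with hL
  have hLsub : ∀ j, L j ⊆ Λ := by rintro j k ⟨m, rfl⟩; exact (e _).2
  have hLinf : ∀ j, (L j).Infinite := fun j =>
    Set.infinite_range_of_injective (fun m m' h => (hginj j m j m' h).2)
  choose z hz1 hzsupp hzbig using fun j => hcon (L j) (hLsub j) (hLinf j)
  set ε : ℕ → ℝ := fun j => if 0 ≤ xstar ((S (z j) : ∀ k, X k) l) then 1 else -1 with hε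
  set w : ℕ → lp X ∞ := fun j => ε j • z j with hw
  have hεnorm : ∀ j, ‖ε j‖ = 1 := by
    intro j
    by_cases h : 0 ≤ xstar ((S (z j) : ∀ k, X k) l) <;> simp [hε, h]
  have hwnorm : ∀ j, ‖w j‖ ≤ 1 := by
    intro j
    rw [hw, norm_smul, hεnorm j, one_mul]
    exact hz1 j
  have hwsupp : ∀ j, ∀ k ∉ L j, (w j : ∀ k, X k) k = 0 := by
    intro j k hk
    have : (w j : ∀ k, X k) k = ε j • (z j : ∀ k, X k) k := by
      rw [hw]; rw [lp.coeFn_smul]; rfl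
    rw [this, hzsupp j k hk, smul_zero]
  have hwbig : ∀ j, ρ / 2 < xstar ((S (w j) : ∀ k, X k) l) := by
    intro j
    have h1 : S (w j) = ε j • S (z j) := by rw [hw]; simp
    have h2 : (S (w j) : ∀ k, X k) l = ε j • (S (z j) : ∀ k, X k) l := by
      rw [h1, lp.coeFn_smul]; rfl
    rw [h2, map_smul]
    have := hzbig j
    by_cases h : 0 ≤ xstar ((S (z j) : ∀ k, X k) l)
    · simp only [hε, if_pos h, smul_eq_mul, one_mul]
      rwa [abs_of_nonneg h] at this
    · simp only [hε, if_neg h, smul_eq_mul, neg_one_mul]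
      rw [abs_of_neg (lt_of_not_ge h)] at this
      exact this
  obtain ⟨n, hn⟩ : ∃ n : ℕ, ‖xstar‖ * ‖S‖ < n * (ρ / 2) := by
    obtain ⟨n, hn⟩ := exists_nat_gt (‖xstar‖ * ‖S‖ / (ρ / 2))
    exact ⟨n, by rwa [div_lt_iff₀ (by linarith)] at hn⟩
  set Z : lp X ∞ := ∑ j ∈ Finset.range n, w j with hZ
  have hZcoe : ∀ k, (Z : ∀ k, X k) k = ∑ j ∈ Finset.range n, (w j : ∀ k, X k) k := by
    intro k
    rw [hZ, lp.coeFn_sum, Finset.sum_apply]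
  have hZnorm : ‖Z‖ ≤ 1 := by
    apply lp.norm_le_of_forall_le zero_le_one
    intro k
    rw [hZcoe k]
    by_cases hk : ∃ j ∈ Finset.range n, k ∈ L j
    · obtain ⟨j0, hj0, hkj0⟩ := hk
      rw [Finset.sum_eq_single j0]
      · exact (lp.norm_apply_le_norm ENNReal.top_ne_zero (w j0) k).trans (hwnorm j0)
      · intro j _ hne
        apply hwsupp j k
        intro hkL
        obtain ⟨m, hm⟩ := hkL
        obtain ⟨m0, hm0⟩ := hkj0
        exact hne ((hginj j m j0 m0 (hm.trans hm0.symm)).1)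
      · intro h; exact absurd hj0 h
    · push_neg at hk
      rw [Finset.sum_eq_zero fun j hj => hwsupp j k (hk j hj)]
      simp
  have hsum : xstar ((S Z : ∀ k, X k) l)
      = ∑ j ∈ Finset.range n, xstar ((S (w j) : ∀ k, X k) l) := by
    have h1 : S Z = ∑ j ∈ Finset.range n, S (w j) := by rw [hZ, map_sum]
    rw [h1, lp.coeFn_sum, Finset.sum_apply, map_sum]
  have hlow : (n : ℝ) * (ρ / 2) ≤ xstar ((S Z : ∀ k, X k) l) := by
    rw [hsum]
    calc (n : ℝ) * (ρ / 2) = ∑ _j ∈ Finset.range n, ρ / 2 := by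
          simp [mul_comm]
      _ ≤ _ := Finset.sum_le_sum fun j _ => (hwbig j).le
  have hup : xstar ((S Z : ∀ k, X k) l) ≤ ‖xstar‖ * ‖S‖ := by
    calc xstar ((S Z : ∀ k, X k) l) ≤ ‖xstar ((S Z : ∀ k, X k) l)‖ := le_abs_self _
      _ ≤ ‖xstar‖ * ‖(S Z : ∀ k, X k) l‖ := xstar.le_opNorm _
      _ ≤ ‖xstar‖ * ‖S Z‖ := by
          gcongr
          exact lp.norm_apply_le_norm ENNReal.top_ne_zero _ _
      _ ≤ ‖xstar‖ * (‖S‖ * ‖Z‖) := by gcongr; exact S.le_opNorm _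
      _ ≤ ‖xstar‖ * ‖S‖ := by
          apply mul_le_mul_of_nonneg_left _ (norm_nonneg _)
          exact mul_le_of_le_one_right (norm_nonneg _) hZnorm
  linarith
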